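/- Let N ≥ 1 and suppose Φ is a strong modular unit of weight 2ℓ for Γ₀(N). For each k ≥ ℓ, the map Ψ ↦ Ψ/Φ is a linear isomorphism from the subspace of forms in M_{2k}(Γ₀(N)) whose q-expansion valuation at the infinite cusp is at least ν(Φ), onto M_{2k−2ℓ}(Γ₀(N)). Consequently M_{2k}(Γ₀(N)) = Φ·M_{2k−2ℓ}(Γ₀(N)) ⊕ V, where V is spanned by the elements of an upper-triangular basis of M_{2k}(Γ₀(N)) whose valuation is less than ν(Φ). -/

import Mathlib

open UpperHalfPlane Filter ModularForm Complex
open Topology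

/-- `f` has q-expansion valuation exactly `n` at the infinite cusp. -/
def HasValuationAtInf (f : ℍ → ℂ) (n : ℕ) : Prop :=
  ∃ a : ℂ, a ≠ 0 ∧
    Tendsto (fun τ : ℍ => f τ / Complex.exp (2 * Real.pi * Complex.I * n * τ))
      UpperHalfPlane.atImInfty (nhds a)

/-- `f` has q-expansion valuation at least `n` at the infinite cusp:
`f(τ)/q^n` has a finite limit as `Im τ → ∞`. -/
def ValuationAtInfGE (f : ℍ → ℂ) (n : ℕ) : Prop :=
  ∃ a : ℂ,
    Tendsto (fun τ : ℍ => f τ / Complex.exp (2 * Real.pi * Complex.I * n * τ))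
      UpperHalfPlane.atImInfty (nhds a)

/-- A strong modular unit of weight `k` at level `N`. -/
def IsStrongModularUnit {N : ℕ} {k : ℤ}
    (Φ : ModularForm (CongruenceSubgroup.Gamma0 N) k) : Prop :=
  (∀ τ : ℍ, Φ τ ≠ 0) ∧
  Tendsto Φ UpperHalfPlane.atImInfty (nhds 0) ∧
  ∀ γ : Matrix.SpecialLinearGroup (Fin 2) ℤ, γ ∉ CongruenceSubgroup.Gamma0 N →
    ∃ a : ℂ, a ≠ 0 ∧ Tendsto (⇑Φ ∣[k] γ) UpperHalfPlane.atImInfty (nhds a)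

noncomputable section AuxHelpers

open Topology
open scoped Manifold

/-- Abbreviation for `q^n` as a function on `ℍ`. -/
abbrev EE (n : ℕ) (τ : ℍ) : ℂ := Complex.exp (2 * Real.pi * Complex.I * n * τ)

lemma EE_ne (n : ℕ) (τ : ℍ) : EE n τ ≠ 0 := Complex.exp_ne_zero _

instance : UpperHalfPlane.atImInfty.NeBot := by
  rw [UpperHalfPlane.atImInfty, Filter.comap_neBot_iff]
  intro t ht
  obtain ⟨b, hb⟩ := Filter.mem_atTop_sets.mp ht
  refine ⟨⟨Complex.I * (max b 1 : ℝ), by simp [lt_max_iff]⟩, hb _ ?_⟩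
  show b ≤ (Complex.I * (max b 1 : ℝ)).im
  simp [le_max_iff]

lemma tendsto_im_atImInfty : Tendsto UpperHalfPlane.im UpperHalfPlane.atImInfty atTop :=
  tendsto_comap

lemma tendsto_EE_zero {n : ℕ} (hn : 0 < n) : Tendsto (EE n) UpperHalfPlane.atImInfty (𝓝 0) := by
  rw [tendsto_zero_iff_norm_tendsto_zero]
  have h1 : ∀ τ : ℍ, ‖EE n τ‖ = Real.exp (-(2 * Real.pi * n) * τ.im) := by
    intro τ
    rw [Complex.norm_exp]
    congr 1
    have : ((τ : ℂ).im) = τ.im := rfl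
    simp [Complex.mul_re, Complex.mul_im, this]
  simp only [h1]
  apply Real.tendsto_exp_atBot.comp
  have h2 : Tendsto (fun τ : ℍ => (2 * Real.pi * n) * τ.im) UpperHalfPlane.atImInfty atTop :=
    Tendsto.const_mul_atTop (by positivity) tendsto_im_atImInfty
  have := tendsto_neg_atTop_atBot.comp h2
  simpa [Function.comp_def, neg_mul] using this

lemma EE_split {a b : ℕ} (h : b ≤ a) (τ : ℍ) : EE a τ = EE b τ * EE (a - b) τ := by
  have h2 : (2 : ℂ) * Real.pi * Complex.I * a * τ
      = 2 * Real.pi * Complex.I * b * τ + 2 * Real.pi * Complex.I * ((a - b : ℕ) : ℂ) * τ := by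
    have : ((a - b : ℕ) : ℂ) = (a : ℂ) - (b : ℂ) := by push_cast [Nat.cast_sub h]; ring
    rw [this]; ring
  rw [EE, h2, Complex.exp_add]

lemma div_EE_shift (f : ℍ → ℂ) {a b : ℕ} (h : b ≤ a) (τ : ℍ) :
    f τ / EE b τ = (f τ / EE a τ) * EE (a - b) τ := by
  rw [EE_split h τ]
  field_simp

lemma tendsto_div_EE_of_lt {f : ℍ → ℂ} {c : ℂ} {a b : ℕ} (h : b < a)
    (hf : Tendsto (fun τ => f τ / EE a τ) UpperHalfPlane.atImInfty (𝓝 c)) :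
    Tendsto (fun τ => f τ / EE b τ) UpperHalfPlane.atImInfty (𝓝 0) := by
  have h2 : Tendsto (fun τ => (f τ / EE a τ) * EE (a - b) τ)
      UpperHalfPlane.atImInfty (𝓝 (c * 0)) :=
    hf.mul (tendsto_EE_zero (by omega))
  rw [mul_zero] at h2
  exact h2.congr (fun τ => (div_EE_shift f h.le τ).symm)

lemma T_mem_Gamma0 (N : ℕ) : ModularGroup.T ∈ CongruenceSubgroup.Gamma0 N := by
  rw [CongruenceSubgroup.Gamma0_mem]
  have : (ModularGroup.T : Matrix (Fin 2) (Fin 2) ℤ) 1 0 = 0 := by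
    rw [ModularGroup.coe_T]; rfl
  simp [this]

lemma mf_periodic {N : ℕ} {k : ℤ} (g : ModularForm (CongruenceSubgroup.Gamma0 N) k) (τ : ℍ) :
    g ((1 : ℝ) +ᵥ τ) = g τ := by
  have h := SlashInvariantForm.slash_action_eqn_SL'' g (T_mem_Gamma0 N) τ
  have hT0 : (ModularGroup.T : Matrix (Fin 2) (Fin 2) ℤ) 1 0 = 0 := by
    rw [ModularGroup.coe_T]; rfl
  have hT1 : (ModularGroup.T : Matrix (Fin 2) (Fin 2) ℤ) 1 1 = 1 := by
    rw [ModularGroup.coe_T]; rfl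
  rw [UpperHalfPlane.modular_T_smul] at h
  rw [h]
  simp [UpperHalfPlane.denom, hT0, hT1]

lemma mf_tendsto {N : ℕ} {k : ℤ} (g : ModularForm (CongruenceSubgroup.Gamma0 N) k) :
    ∃ c : ℂ, Tendsto g UpperHalfPlane.atImInfty (𝓝 c) := by
  have hper : Function.Periodic (⇑g ∘ UpperHalfPlane.ofComplex) 1 := by
    intro w
    by_cases hw : 0 < w.im
    · have h1 : 0 < (w + 1).im := by simp [hw]
      simp only [Function.comp_apply, UpperHalfPlane.ofComplex_apply_of_im_pos h1,
        UpperHalfPlane.ofComplex_apply_of_im_pos hw]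
      have := mf_periodic g ⟨w, hw⟩
      convert this using 2
      simp [UpperHalfPlane.ext_iff, UpperHalfPlane.coe_vadd, add_comm]
    · have h1 : (w + 1).im ≤ 0 := by simpa using hw
      simp only [Function.comp_apply, UpperHalfPlane.ofComplex_apply_of_im_nonpos h1,
        UpperHalfPlane.ofComplex_apply_of_im_nonpos (not_lt.mp hw)]
  have hhol : ∀ᶠ z in Filter.comap Complex.im atTop,
      DifferentiableAt ℂ (⇑g ∘ UpperHalfPlane.ofComplex) z :=
    Filter.eventually_of_mem (Filter.preimage_mem_comap (Ioi_mem_atTop 0))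
      (fun z hz => UpperHalfPlane.mdifferentiableAt_iff.mp (g.holo' ⟨z, hz⟩))
  have hbd := ModularFormClass.bounded_at_infty_comp_ofComplex g
    (Subgroup.isCusp_of_mem_strictPeriods one_pos (by
      rw [Subgroup.strictPeriods_eq_zmultiples_one_of_T_mem (T_mem_Gamma0 N)]
      exact AddSubgroup.mem_zmultiples 1))
  have := Function.Periodic.tendsto_at_I_inf one_pos hper hhol hbd
  refine ⟨Function.Periodic.cuspFunction 1 (⇑g ∘ UpperHalfPlane.ofComplex) 0, ?_⟩
  have h2 := this.comp UpperHalfPlane.tendsto_coe_atImInfty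
  refine h2.congr fun τ => ?_
  simp [Function.comp_apply, UpperHalfPlane.ofComplex_apply]

lemma slash_apply_SL2 (k : ℤ) (A : Matrix.SpecialLinearGroup (Fin 2) ℤ) (f : ℍ → ℂ) (τ : ℍ) :
    (f ∣[k] A) τ = f (A • τ) * UpperHalfPlane.denom A τ ^ (-k) := by
  rw [ModularForm.SL_slash_apply]

lemma slash_ne_zero_of_ne_zero {k : ℤ} {A : Matrix.SpecialLinearGroup (Fin 2) ℤ} {f : ℍ → ℂ}
    (hf : ∀ τ, f τ ≠ 0) (τ : ℍ) : (f ∣[k] A) τ ≠ 0 := by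
  rw [slash_apply_SL2]
  exact mul_ne_zero (hf _) (zpow_ne_zero _ (UpperHalfPlane.denom_ne_zero _ _))

lemma div_slash_SL2 (k1 k2 : ℤ) (A : Matrix.SpecialLinearGroup (Fin 2) ℤ) (f g : ℍ → ℂ)
    (hg : ∀ τ, g τ ≠ 0) :
    (fun τ => f τ / g τ) ∣[k1 - k2] A = fun τ => (f ∣[k1] A) τ / (g ∣[k2] A) τ := by
  have hmul := ModularForm.mul_slash_SL2 (k1 - k2) k2 A (fun τ => f τ / g τ) g
  have h1 : (fun τ => f τ / g τ) * g = f := by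
    funext τ; exact div_mul_cancel₀ _ (hg τ)
  rw [sub_add_cancel, h1] at hmul
  funext τ
  have h2 : (g ∣[k2] A) τ ≠ 0 := slash_ne_zero_of_ne_zero hg τ
  rw [eq_div_iff h2]
  have := congrFun hmul τ
  rw [this]; rfl

/-- The quotient of a modular form by a nonvanishing modular form with bounded quotients. -/
def divModularForm {N : ℕ} {k1 k2 : ℤ} (Ψ : ModularForm (CongruenceSubgroup.Gamma0 N) k1)
    (Φ : ModularForm (CongruenceSubgroup.Gamma0 N) k2) (h0 : ∀ τ, Φ τ ≠ 0)
    (hbd : ∀ A : Matrix.SpecialLinearGroup (Fin 2) ℤ,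
      UpperHalfPlane.IsBoundedAtImInfty (fun τ => (⇑Ψ ∣[k1] A) τ / (⇑Φ ∣[k2] A) τ)) :
    ModularForm (CongruenceSubgroup.Gamma0 N) (k1 - k2) where
  toFun := fun τ => Ψ τ / Φ τ
  slash_action_eq' := fun γ hγ => by
    obtain ⟨γ', hγ', rfl⟩ := hγ
    have e := _root_.div_slash_SL2 k1 k2 γ' Ψ Φ h0
    rw [ModularForm.SL_slash, ModularForm.SL_slash, ModularForm.SL_slash] at e
    show (fun τ => Ψ τ / Φ τ) ∣[k1 - k2] (γ' : GL (Fin 2) ℝ) = _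
    rw [e, SlashInvariantForm.slash_action_eqn (Γ := Subgroup.map (Matrix.SpecialLinearGroup.mapGL ℝ) (CongruenceSubgroup.Gamma0 N)) Ψ (γ' : GL (Fin 2) ℝ) ⟨γ', hγ', rfl⟩,
      SlashInvariantForm.slash_action_eqn (Γ := Subgroup.map (Matrix.SpecialLinearGroup.mapGL ℝ) (CongruenceSubgroup.Gamma0 N)) Φ (γ' : GL (Fin 2) ℝ) ⟨γ', hγ', rfl⟩]
  holo' := by
    have h1 : MDifferentiable 𝓘(ℂ) 𝓘(ℂ) (fun τ : ℍ => (Φ τ)⁻¹) := fun τ =>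
      ((differentiableAt_inv (h0 τ)).mdifferentiableAt).comp τ (Φ.holo' τ)
    have h2 := Ψ.holo'.mul h1
    exact h2
  bdd_at_cusps' := fun hc => by
    rw [OnePoint.isBoundedAt_iff_forall_SL2Z
      (hc.mono (by rintro _ ⟨x, -, rfl⟩; exact ⟨x, rfl⟩))]
    intro A _
    show UpperHalfPlane.IsBoundedAtImInfty ((fun τ => Ψ τ / Φ τ) ∣[k1 - k2] A)
    rw [_root_.div_slash_SL2 k1 k2 A _ _ h0]
    exact hbd A

@[simp] lemma divModularForm_apply {N : ℕ} {k1 k2 : ℤ}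
    (Ψ : ModularForm (CongruenceSubgroup.Gamma0 N) k1)
    (Φ : ModularForm (CongruenceSubgroup.Gamma0 N) k2) (h0 : ∀ τ, Φ τ ≠ 0) (hbd) (τ : ℍ) :
    divModularForm Ψ Φ h0 hbd τ = Ψ τ / Φ τ := rfl

/-- Multiplication by `Φ`, recast to weight `b`. -/
def mulCast {N : ℕ} {k2 c b : ℤ} (Φ : ModularForm (CongruenceSubgroup.Gamma0 N) k2)
    (h : k2 + c = b) :
    ModularForm (CongruenceSubgroup.Gamma0 N) c →ₗ[ℂ]
      ModularForm (CongruenceSubgroup.Gamma0 N) b where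
  toFun g := ModularForm.mcast h (Φ.mul g)
  map_add' g1 g2 := by
    ext τ
    show Φ τ * (g1 τ + g2 τ) = Φ τ * g1 τ + Φ τ * g2 τ
    ring
  map_smul' r g := by
    ext τ
    show Φ τ * (r • g τ) = r • (Φ τ * g τ)
    simp [smul_eq_mul]; ring

lemma mulCast_apply {N : ℕ} {k2 c b : ℤ} (Φ : ModularForm (CongruenceSubgroup.Gamma0 N) k2)
    (h : k2 + c = b) (g : ModularForm (CongruenceSubgroup.Gamma0 N) c) (τ : ℍ) :
    mulCast Φ h g τ = Φ τ * g τ := rfl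

lemma MF_sum_apply {Γ : Subgroup (Matrix.SpecialLinearGroup (Fin 2) ℤ)} {w : ℤ} {ι : Type*}
    (s : Finset ι) (f : ι → ModularForm Γ w) (τ : ℍ) :
    (∑ i ∈ s, f i) τ = ∑ i ∈ s, f i τ := by
  simpa using congrFun (map_sum (ModularForm.coeHom (Γ := Γ) (k := w)) f s) τ

end AuxHelpers

/-- Multiplication by the strong modular unit `Φ` (equivalently, the inverse of the
map `Ψ ↦ Ψ/Φ`) is an injective linear map from `M_{2k-2ℓ}(Γ₀(N))` to `M_{2k}(Γ₀(N))`
whose range is exactly the subspace of forms of valuation at least `ν(Φ)`.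
Consequently, given an upper-triangular basis `B` of `M_{2k}(Γ₀(N))` (valuations
strictly increasing), `M_{2k}(Γ₀(N)) = Φ·M_{2k-2ℓ}(Γ₀(N)) ⊕ V`, where `V` is spanned
by the basis elements of valuation less than `ν(Φ)`. -/
theorem stmt_19 (N : ℕ) (hN : 1 ≤ N) (ℓ k : ℕ) (hk : ℓ ≤ k)
    (Φ : ModularForm (CongruenceSubgroup.Gamma0 N) (2 * ℓ))
    (hΦ : IsStrongModularUnit Φ)
    (nΦ : ℕ) (hν : HasValuationAtInf Φ nΦ) :
    ∃ T : ModularForm (CongruenceSubgroup.Gamma0 N) (2 * k - 2 * ℓ) →ₗ[ℂ]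
        ModularForm (CongruenceSubgroup.Gamma0 N) (2 * k),
      (∀ g τ, T g τ = Φ τ * g τ) ∧
      Function.Injective T ∧
      (∀ Ψ : ModularForm (CongruenceSubgroup.Gamma0 N) (2 * k),
        Ψ ∈ LinearMap.range T ↔ ValuationAtInfGE Ψ nΦ) ∧
      ∀ (d : ℕ) (B : Module.Basis (Fin d) ℂ (ModularForm (CongruenceSubgroup.Gamma0 N) (2 * k)))
        (v : Fin d → ℕ), (∀ i, HasValuationAtInf (B i) (v i)) → StrictMono v →
        IsCompl (LinearMap.range T)
          (Submodule.span ℂ (B '' {i : Fin d | v i < nΦ})) := by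
  obtain ⟨h0, htends0, hcusp⟩ := hΦ
  obtain ⟨a, ha, hlim⟩ := hν
  set T := mulCast Φ (show (2 * (ℓ : ℤ)) + (2 * k - 2 * ℓ) = 2 * k by ring) with hT
  have hrange : ∀ Ψ : ModularForm (CongruenceSubgroup.Gamma0 N) (2 * k),
      Ψ ∈ LinearMap.range T ↔ ValuationAtInfGE Ψ nΦ := by
      intro Ψ
      constructor
      · rintro ⟨g, rfl⟩
        obtain ⟨b, hb⟩ := mf_tendsto g
        refine ⟨a * b, ?_⟩
        have h1 : Tendsto (fun τ : ℍ => (Φ τ / EE nΦ τ) * g τ)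
            UpperHalfPlane.atImInfty (𝓝 (a * b)) := hlim.mul hb
        refine h1.congr fun τ => ?_
        rw [mulCast_apply]
        rw [mul_div_right_comm]
      · rintro ⟨b, hb⟩
        have hbd : ∀ A : Matrix.SpecialLinearGroup (Fin 2) ℤ,
            UpperHalfPlane.IsBoundedAtImInfty
              (fun τ => (⇑Ψ ∣[(2 * k : ℤ)] A) τ / (⇑Φ ∣[(2 * ℓ : ℤ)] A) τ) := by
          intro A
          by_cases hA : A ∈ CongruenceSubgroup.Gamma0 N
          · rw [ModularForm.SL_slash, ModularForm.SL_slash,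
              SlashInvariantForm.slash_action_eqn (Γ := Subgroup.map (Matrix.SpecialLinearGroup.mapGL ℝ) (CongruenceSubgroup.Gamma0 N)) Ψ (A : GL (Fin 2) ℝ) ⟨A, hA, rfl⟩,
              SlashInvariantForm.slash_action_eqn (Γ := Subgroup.map (Matrix.SpecialLinearGroup.mapGL ℝ) (CongruenceSubgroup.Gamma0 N)) Φ (A : GL (Fin 2) ℝ) ⟨A, hA, rfl⟩]
            have h1 : Tendsto (fun τ : ℍ => Ψ τ / Φ τ) UpperHalfPlane.atImInfty (𝓝 (b / a)) := by
              have := hb.div hlim ha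
              refine this.congr fun τ => ?_
              simp only [Pi.div_apply]
              rw [div_div_div_cancel_right₀]
              exact EE_ne nΦ τ
            exact h1.isBigO_one ℝ
          · obtain ⟨a', ha', hlim'⟩ := hcusp A hA
            have h1 : Tendsto (fun τ : ℍ => ((⇑Φ ∣[(2 * ℓ : ℤ)] A) τ)⁻¹)
                UpperHalfPlane.atImInfty (𝓝 a'⁻¹) := hlim'.inv₀ ha'
            have h2 := (haveI : NeZero N := ⟨by omega⟩; ModularFormClass.bdd_at_infty_slash Ψ A).mul (h1.isBigO_one ℝ)
            simp only [div_eq_mul_inv]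
            exact h2
        refine ⟨divModularForm Ψ Φ h0 hbd, ?_⟩
        ext τ
        rw [mulCast_apply, divModularForm_apply, mul_comm, div_mul_cancel₀ _ (h0 τ)]
  refine ⟨T, fun g τ => rfl, ?_, hrange, ?_⟩
  · -- injectivity
    intro g1 g2 h
    ext τ
    have h2 : Φ τ * g1 τ = Φ τ * g2 τ := DFunLike.congr_fun h τ
    exact mul_left_cancel₀ (h0 τ) h2
  · -- the IsCompl statement
    intro d B v hv hmono
    choose w hw1 hw2 using hv
    constructor
    · -- disjointness
      rw [Submodule.disjoint_def]
      intro Ψ hΨr hΨs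
      by_contra hne
      have hreprne : B.repr Ψ ≠ 0 := by
        simpa using (B.repr.map_ne_zero_iff).mpr hne
      have hs_ne : (B.repr Ψ).support.Nonempty := Finsupp.support_nonempty_iff.mpr hreprne
      set i₀ := (B.repr Ψ).support.min' hs_ne with hi₀def
      have hi₀ : i₀ ∈ (B.repr Ψ).support := Finset.min'_mem _ _
      have hsupp : ((B.repr Ψ).support : Set (Fin d)) ⊆ {i | v i < nΦ} :=
        B.mem_span_image.mp hΨs
      have hv₀ : v i₀ < nΦ := hsupp hi₀
      -- pointwise expansion
      have hrepr : ∀ τ : ℍ, Ψ τ = ∑ i, (B.repr Ψ) i • (B i τ) := by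
        intro τ
        conv_lhs => rw [← B.sum_repr Ψ]
        rw [MF_sum_apply]
        exact Finset.sum_congr rfl fun i _ => by rw [ModularForm.smul_apply]
      -- limit of Ψ / EE (v i₀)
      have hlimsum : Tendsto (fun τ : ℍ => Ψ τ / EE (v i₀) τ) UpperHalfPlane.atImInfty
          (𝓝 ((B.repr Ψ) i₀ • w i₀)) := by
        have hterm : ∀ i : Fin d, Tendsto (fun τ : ℍ => (B.repr Ψ) i • (B i τ) / EE (v i₀) τ)
            UpperHalfPlane.atImInfty
            (𝓝 (if i = i₀ then (B.repr Ψ) i₀ • w i₀ else 0)) := by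
          intro i
          rcases eq_or_ne i i₀ with heq | hne'
          · rw [if_pos heq, heq]
            have := (hw2 i₀).const_smul ((B.repr Ψ) i₀)
            refine this.congr fun τ => ?_
            rw [smul_div_assoc]
          · rw [if_neg hne']
            by_cases hmem : i ∈ (B.repr Ψ).support
            · have hlt : i₀ < i :=
                lt_of_le_of_ne (Finset.min'_le _ _ hmem) (Ne.symm hne')
            
              have hvlt : v i₀ < v i := hmono hlt
              have h3 : Tendsto (fun τ : ℍ => B i τ / EE (v i₀) τ)
                  UpperHalfPlane.atImInfty (𝓝 0) := tendsto_div_EE_of_lt hvlt (hw2 i)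
              have := h3.const_smul ((B.repr Ψ) i)
              rw [smul_zero] at this
              refine this.congr fun τ => ?_
              rw [smul_div_assoc]
            · have hz : (B.repr Ψ) i = 0 := Finsupp.notMem_support_iff.mp hmem
              simp [hz]
        have hsum := tendsto_finset_sum Finset.univ (fun i _ => hterm i)
        have hS : (∑ i, if i = i₀ then (B.repr Ψ) i₀ • w i₀ else 0)
            = (B.repr Ψ) i₀ • w i₀ := by
          rw [Finset.sum_ite_eq' Finset.univ i₀ (fun _ => (B.repr Ψ) i₀ • w i₀)]
          simp
        rw [hS] at hsum
        refine hsum.congr fun τ => ?_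
        rw [hrepr τ, Finset.sum_div]
      -- but the valuation-≥ condition gives limit 0
      obtain ⟨cc, hcc⟩ := (hrange Ψ).mp hΨr
      have hzero : Tendsto (fun τ : ℍ => Ψ τ / EE (v i₀) τ) UpperHalfPlane.atImInfty (𝓝 0) :=
        tendsto_div_EE_of_lt hv₀ hcc
      have hEq : (B.repr Ψ) i₀ • w i₀ = 0 := tendsto_nhds_unique hlimsum hzero
      rcases smul_eq_zero.mp hEq with h | h
      · exact (Finsupp.mem_support_iff.mp hi₀) h
      · exact hw1 i₀ h
    · -- codisjointness
      rw [codisjoint_iff, eq_top_iff]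
      intro Ψ _
      rw [Submodule.mem_sup]
      refine ⟨∑ i ∈ Finset.univ.filter (fun i => ¬ v i < nΦ), (B.repr Ψ) i • B i, ?_,
        ∑ i ∈ Finset.univ.filter (fun i => v i < nΦ), (B.repr Ψ) i • B i, ?_, ?_⟩
      · rw [hrange]
        have key : ∀ i : Fin d, ∃ li : ℂ, nΦ ≤ v i →
            Tendsto (fun τ : ℍ => B i τ / EE nΦ τ) UpperHalfPlane.atImInfty (𝓝 li) := by
          intro i
          rcases lt_or_ge nΦ (v i) with hlt | hle
          · exact ⟨0, fun _ => tendsto_div_EE_of_lt hlt (hw2 i)⟩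
          · rcases eq_or_lt_of_le hle with heq | hlt
            · refine ⟨w i, fun _ => ?_⟩
              rw [← heq]
              exact hw2 i
            · exact ⟨0, fun h => absurd h (by omega)⟩
        choose li hli using key
        refine ⟨∑ i ∈ Finset.univ.filter (fun i => ¬ v i < nΦ), (B.repr Ψ) i • li i, ?_⟩
        have hterm : ∀ i ∈ Finset.univ.filter (fun i => ¬ v i < nΦ),
            Tendsto (fun τ : ℍ => (B.repr Ψ) i • (B i τ) / EE nΦ τ)
              UpperHalfPlane.atImInfty (𝓝 ((B.repr Ψ) i • li i)) := by
          intro i hi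
          have hge : nΦ ≤ v i := by
            have := Finset.mem_filter.mp hi
            omega
          have := (hli i hge).const_smul ((B.repr Ψ) i)
          refine this.congr fun τ => ?_
          rw [smul_div_assoc]
        have hsum := tendsto_finset_sum _ hterm
        refine hsum.congr fun τ => ?_
        rw [MF_sum_apply, Finset.sum_div]
        exact Finset.sum_congr rfl fun i _ => by rw [ModularForm.smul_apply]
      · refine Submodule.sum_mem _ fun i hi => ?_
        have hmem : v i < nΦ := (Finset.mem_filter.mp hi).2
        exact Submodule.smul_mem _ _ (Submodule.subset_span ⟨i, hmem, rfl⟩)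
      · rw [add_comm, Finset.sum_filter_add_sum_filter_not]
        exact B.sum_repr Ψ
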